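/- Trace distance between tensor product states: Let ρ_i, σ_i ∈ S_d for i = 1, …, n, and set ρ^{(n)} = ρ_1 ⊗ … ⊗ ρ_n and σ^{(n)} = σ_1 ⊗ … ⊗ σ_n. Then 1 − exp(−(1/2)Σ_{i=1}^n d_tr²(ρ_i,σ_i)) ≤ d_tr(ρ^{(n)}, σ^{(n)}) ≤ Σ_{i=1}^n d_tr(ρ_i,σ_i). -/

import Mathlib

open scoped Matrix ComplexOrder
open Matrix

/-- The square root of a positive semidefinite matrix (as defined in Mathlib, Dec 2024). -/
noncomputable def Matrix.PosSemidef.sqrt {n 𝕜 : Type*} [Fintype n] [RCLike 𝕜] [DecidableEq n]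
    {A : Matrix n n 𝕜} (hA : A.PosSemidef) : Matrix n n 𝕜 :=
  hA.1.eigenvectorUnitary.1 * diagonal ((↑) ∘ (Real.sqrt ·) ∘ hA.1.eigenvalues) *
    (star hA.1.eigenvectorUnitary : Matrix n n 𝕜)

section Defs

variable {m : Type*}

/-- The trace norm `‖X‖₁ = tr √(XᴴX)`. -/
noncomputable def traceNorm [Fintype m] [DecidableEq m] (X : Matrix m m ℂ) : ℝ :=
  ((Matrix.posSemidef_conjTranspose_mul_self X).sqrt.trace).re

/-- The trace distance `d_tr(ρ,σ) = ‖ρ - σ‖₁ / 2`. -/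
noncomputable def trDist [Fintype m] [DecidableEq m] (ρ σ : Matrix m m ℂ) : ℝ :=
  traceNorm (ρ - σ) / 2

/-- A density matrix: positive semidefinite (hence Hermitian) with unit trace. -/
def IsDensityMatrix [Fintype m] (ρ : Matrix m m ℂ) : Prop :=
  ρ.PosSemidef ∧ ρ.trace = 1

/-- Apply a superoperator, given by its matrix representation
(rows/columns indexed by matrix entry positions), to a matrix. -/
noncomputable def appS [Fintype m] (S : Matrix (m × m) (m × m) ℂ) (ρ : Matrix m m ℂ) :
    Matrix m m ℂ :=
  Matrix.of fun i j => ∑ p : m × m, S (i, j) p * ρ p.1 p.2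

/-- The Choi matrix of a superoperator. -/
def choiMatrix [Fintype m] (S : Matrix (m × m) (m × m) ℂ) : Matrix (m × m) (m × m) ℂ :=
  Matrix.of fun p q => S (p.2, q.2) (p.1, q.1)

/-- Quantum channel: completely positive (positive semidefinite Choi matrix)
and trace preserving. -/
def IsQChannelM [Fintype m] (S : Matrix (m × m) (m × m) ℂ) : Prop :=
  (choiMatrix S).PosSemidef ∧ ∀ X : Matrix m m ℂ, (appS S X).trace = X.trace

/-- `expS t L` is the superoperator `e^{tL}`. -/
noncomputable def expS [Fintype m] [DecidableEq m] (t : ℝ) (L : Matrix (m × m) (m × m) ℂ) :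
    Matrix (m × m) (m × m) ℂ :=
  NormedSpace.exp ((t : ℂ) • L)

/-- A Liouvillian: `e^{tL}` is a quantum channel for every `t ≥ 0`. -/
def IsLiouvillianM [Fintype m] [DecidableEq m] (L : Matrix (m × m) (m × m) ℂ) : Prop :=
  ∀ t : ℝ, 0 ≤ t → IsQChannelM (expS t L)

/-- `lam` is the spectral gap of the Liouvillian `L`:
`lam = inf {|Re μ| : μ eigenvalue of L, Re μ < 0}` (and such an eigenvalue exists). -/
def IsGapOf [Fintype m] [DecidableEq m] (L : Matrix (m × m) (m × m) ℂ) (lam : ℝ) : Prop :=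
  (∃ μ ∈ spectrum ℂ L, μ.re < 0) ∧
  lam = sInf {r : ℝ | ∃ μ ∈ spectrum ℂ L, μ.re < 0 ∧ r = -μ.re}

/-- `Tφ` is the peripheral evolution `T_{φ,t} = Σ_{k : Re λ_k = 0} e^{tλ_k} P_k` of the
semigroup generated by `L`: it acts as `e^{tμ}` on each generalized eigenspace of `L` with
`Re μ = 0`, and as `0` on each generalized eigenspace with `Re μ < 0`. -/
def IsPeriphEvolAt [Fintype m] (L : Matrix (m × m) (m × m) ℂ) (t : ℝ)
    (Tφ : Matrix (m × m) (m × m) ℂ) : Prop :=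
  (∀ μ : ℂ, μ.re = 0 → ∀ v ∈ Module.End.maxGenEigenspace (Matrix.mulVecLin L) μ,
      Tφ.mulVec v = Complex.exp (t * μ) • v) ∧
  (∀ μ : ℂ, μ.re < 0 → ∀ v ∈ Module.End.maxGenEigenspace (Matrix.mulVecLin L) μ,
      Tφ.mulVec v = 0)

/-- `Tφ` is the peripheral projection `T_φ = Σ_{k : |μ_k| = 1} μ_k P_k` of the channel `T`:
it acts as `μ •` on each generalized eigenspace of `T` with `|μ| = 1`, and as `0` on each
generalized eigenspace with `|μ| < 1`. -/
def IsPeriphProjM [Fintype m] (T Tφ : Matrix (m × m) (m × m) ℂ) : Prop :=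
  (∀ μ : ℂ, ‖μ‖ = 1 → ∀ v ∈ Module.End.maxGenEigenspace (Matrix.mulVecLin T) μ,
      Tφ.mulVec v = μ • v) ∧
  (∀ μ : ℂ, ‖μ‖ < 1 → ∀ v ∈ Module.End.maxGenEigenspace (Matrix.mulVecLin T) μ,
      Tφ.mulVec v = 0)

/-- The trace-norm contraction `η_tr[T] = sup_ρ d_tr(T(ρ), Tφ(ρ))` over density matrices. -/
noncomputable def etaTR [Fintype m] [DecidableEq m] (T Tφ : Matrix (m × m) (m × m) ℂ) : ℝ :=
  ⨆ ρ : {ρ : Matrix m m ℂ // IsDensityMatrix ρ}, trDist (appS T ρ.1) (appS Tφ ρ.1)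

open scoped Classical in
/-- Matrix square root of a positive semidefinite matrix (junk value `0` otherwise). -/
noncomputable def msqrt [Fintype m] [DecidableEq m] (A : Matrix m m ℂ) : Matrix m m ℂ :=
  if h : A.PosSemidef then h.sqrt else 0

/-- The fidelity `F(ρ,σ) = tr √(√ρ σ √ρ)`. -/
noncomputable def fidelity [Fintype m] [DecidableEq m] (ρ σ : Matrix m m ℂ) : ℝ :=
  ((msqrt (msqrt ρ * σ * msqrt ρ)).trace).re

/-- The Bures distance `d_B(ρ,σ) = √(1 - F(ρ,σ))`. -/
noncomputable def buresDist [Fintype m] [DecidableEq m] (ρ σ : Matrix m m ℂ) : ℝ :=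
  Real.sqrt (1 - fidelity ρ σ)

/-- The Frobenius (Hilbert-Schmidt) norm `‖X‖₂ = √(tr XᴴX)`. -/
noncomputable def frobNorm [Fintype m] (X : Matrix m m ℂ) : ℝ :=
  Real.sqrt ((Xᴴ * X).trace.re)

/-- The operator (spectral) norm `‖A‖_∞`. -/
noncomputable def specNorm [Fintype m] [DecidableEq m] (A : Matrix m m ℂ) : ℝ :=
  ‖(Matrix.toEuclideanLin A).toContinuousLinearMap‖

/-- The superoperator norm `‖S‖_{2→2} = sup {‖S(X)‖₂ : ‖X‖₂ ≤ 1}` induced by the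
Frobenius norm. -/
noncomputable def superNorm22 [Fintype m] (S : Matrix (m × m) (m × m) ℂ) : ℝ :=
  ⨆ X : {X : Matrix m m ℂ // frobNorm X ≤ 1}, frobNorm (appS S X.1)

/-- The dual (Heisenberg-picture) superoperator `S*`, satisfying
`tr[A S*(B)] = tr[S(A) B]`. -/
def dualS [Fintype m] (S : Matrix (m × m) (m × m) ℂ) : Matrix (m × m) (m × m) ℂ :=
  Matrix.of fun p q => S (q.2, q.1) (p.2, p.1)

/-- Matrix representation of the superoperator `ρ ↦ A ρ B`. -/
def sandwichS [Fintype m] (A B : Matrix m m ℂ) : Matrix (m × m) (m × m) ℂ :=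
  Matrix.of fun p q => A p.1 q.1 * B q.2 p.2

/-- The Lindblad dissipator `ρ ↦ L ρ L† − (1/2)L†L ρ − (1/2)ρ L†L` in matrix
representation. -/
noncomputable def lindbladTermS [Fintype m] [DecidableEq m] (L : Matrix m m ℂ) :
    Matrix (m × m) (m × m) ℂ :=
  sandwichS L Lᴴ - (1 / 2 : ℂ) • sandwichS (Lᴴ * L) 1 - (1 / 2 : ℂ) • sandwichS 1 (Lᴴ * L)

/-- Tensor (Kronecker) product of two superoperators. -/
def kronS {m' : Type*} [Fintype m] [Fintype m'] (S : Matrix (m × m) (m × m) ℂ)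
    (S' : Matrix (m' × m') (m' × m') ℂ) :
    Matrix ((m × m') × (m × m')) ((m × m') × (m × m')) ℂ :=
  Matrix.of fun p q =>
    S (p.1.1, p.2.1) (q.1.1, q.2.1) * S' (p.1.2, p.2.2) (q.1.2, q.2.2)

end Defs

/-- `n`-fold tensor power `S^{⊗n}` of a superoperator on `M_d`. -/
noncomputable def tensorPowS (n : ℕ) {d : ℕ} (S : Matrix (Fin d × Fin d) (Fin d × Fin d) ℂ) :
    Matrix ((Fin n → Fin d) × (Fin n → Fin d)) ((Fin n → Fin d) × (Fin n → Fin d)) ℂ :=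
  Matrix.of fun p q => ∏ i, S (p.1 i, p.2 i) (q.1 i, q.2 i)

/-- `n`-fold tensor power `ρ^{⊗n}` of a matrix. -/
noncomputable def tensorPowM (n : ℕ) {d : ℕ} (ρ : Matrix (Fin d) (Fin d) ℂ) :
    Matrix (Fin n → Fin d) (Fin n → Fin d) ℂ :=
  Matrix.of fun x y => ∏ i, ρ (x i) (y i)

/-- Tensor product `A 0 ⊗ A 1 ⊗ … ⊗ A (n-1)` of a family of matrices. -/
noncomputable def tensorFamilyM {n d : ℕ} (A : Fin n → Matrix (Fin d) (Fin d) ℂ) :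
    Matrix (Fin n → Fin d) (Fin n → Fin d) ℂ :=
  Matrix.of fun x y => ∏ i, A i (x i) (y i)


namespace TPB

variable {m : Type*} [Fintype m] [DecidableEq m]

lemma msq_eq_cfc {A : Matrix m m ℂ} (hA : A.PosSemidef) : hA.sqrt = cfc Real.sqrt A := by
  rw [hA.1.cfc_eq]; rfl

lemma spec_nonneg_psd {A : Matrix m m ℂ} (hA : A.PosSemidef) : ∀ x ∈ spectrum ℝ A, 0 ≤ x := by
  intro x hx
  rw [hA.1.spectrum_real_eq_range_eigenvalues] at hx
  obtain ⟨i, rfl⟩ := hx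
  exact hA.eigenvalues_nonneg i

lemma msq_psd {A : Matrix m m ℂ} (hA : A.PosSemidef) : hA.sqrt.PosSemidef := by
  have := (PosSemidef.diagonal (d := fun i => ((Real.sqrt (hA.1.eigenvalues i) : ℝ) : ℂ))
    (fun i => Complex.zero_le_real.mpr (Real.sqrt_nonneg _))).mul_mul_conjTranspose_same
    (hA.1.eigenvectorUnitary : Matrix m m ℂ)
  exact this

lemma msq_mul_self {A : Matrix m m ℂ} (hA : A.PosSemidef) : hA.sqrt * hA.sqrt = A := by
  rw [msq_eq_cfc, ← cfc_mul Real.sqrt Real.sqrt A]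
  exact (cfc_congr (fun x hx => Real.mul_self_sqrt (spec_nonneg_psd hA x hx))).trans
    (cfc_id' ℝ A (hA.1 : IsSelfAdjoint A))

lemma msq_eq_of_sq_eq {A : Matrix m m ℂ} (hA : A.PosSemidef) {B : Matrix m m ℂ}
    (hB : B.PosSemidef) (h : B ^ 2 = A) : B = hA.sqrt := by
  rw [msq_eq_cfc, ← h]
  refine ((cfc_congr (f := fun x => Real.sqrt (x ^ 2)) (g := fun x => x) (a := B)
    fun x hx => Real.sqrt_sq (spec_nonneg_psd hB x hx)).trans
    (cfc_id' ℝ B (hB.1 : IsSelfAdjoint B))).symm.trans ?_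
  exact cfc_comp_pow Real.sqrt 2 B (ha := (hB.1 : IsSelfAdjoint B))

lemma psd_diag_nonneg {A : Matrix m m ℂ} (hA : A.PosSemidef) (i : m) : 0 ≤ A i i := by
  exact hA.diag_nonneg

lemma psd_trace_nonneg {A : Matrix m m ℂ} (hA : A.PosSemidef) : 0 ≤ A.trace :=
  Finset.sum_nonneg fun i _ => psd_diag_nonneg hA i

lemma psd_trace_re_nonneg {A : Matrix m m ℂ} (hA : A.PosSemidef) : 0 ≤ A.trace.re :=
  (Complex.le_def.mp (psd_trace_nonneg hA)).1

lemma trace_mul_nonneg {A B : Matrix m m ℂ} (hA : A.PosSemidef) (hB : B.PosSemidef) :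
    0 ≤ ((A * B).trace).re := by
  obtain ⟨C, rfl⟩ : ∃ C : Matrix m m ℂ, B = Cᴴ * C :=
    ⟨hB.sqrt, by rw [(msq_psd hB).1.eq, msq_mul_self hB]⟩
  have h : (A * (Cᴴ * C)).trace = (C * A * Cᴴ).trace := by
    rw [← Matrix.mul_assoc, Matrix.trace_mul_comm, Matrix.mul_assoc, ← Matrix.mul_assoc]
  rw [h]
  exact psd_trace_re_nonneg (hA.mul_mul_conjTranspose_same C)

lemma trace_mul_real {A B : Matrix m m ℂ} (hA : A.IsHermitian) (hB : B.IsHermitian) :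
    (A * B).trace = (((A * B).trace).re : ℂ) := by
  have h : star ((A * B).trace) = (A * B).trace := by
    rw [← Matrix.trace_conjTranspose, conjTranspose_mul, hA.eq, hB.eq, Matrix.trace_mul_comm]
  have him : ((A * B).trace).im = 0 := by
    have := congrArg Complex.im h
    simp only [Complex.star_def, Complex.conj_im] at this
    linarith
  exact (Complex.ext (by simp) (by simp [him])).symm

lemma traceNorm_eq_posneg {X P N : Matrix m m ℂ} (hP : P.PosSemidef) (hN : N.PosSemidef)
    (hX : X = P - N) (hPN : P * N = 0) :
    traceNorm X = P.trace.re + N.trace.re := by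
  have hNP : N * P = 0 := by
    have := congrArg conjTranspose hPN
    rwa [conjTranspose_mul, hP.1, hN.1, conjTranspose_zero] at this
  have hsq : (P + N) ^ 2 = Xᴴ * X := by
    have hXh : Xᴴ = X := by rw [hX, conjTranspose_sub, hP.1, hN.1]
    rw [hXh, hX]
    simp only [pow_two, add_mul, mul_add, sub_mul, mul_sub, hPN, hNP]
    abel
  have key : P + N = (Matrix.posSemidef_conjTranspose_mul_self X).sqrt :=
    msq_eq_of_sq_eq _ (hP.add hN) hsq
  rw [traceNorm, ← key, trace_add, Complex.add_re]

set_option maxHeartbeats 800000 in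
lemma hermitian_decomp {X : Matrix m m ℂ} (hX : X.IsHermitian) :
    ∃ P N Q : Matrix m m ℂ, P.PosSemidef ∧ N.PosSemidef ∧ X = P - N ∧ P * N = 0 ∧
      Q.PosSemidef ∧ (1 - Q).PosSemidef ∧ (X * Q).trace = P.trace := by
  classical
  set U : Matrix m m ℂ := (hX.eigenvectorUnitary : Matrix m m ℂ) with hUdef
  have hU : U * Uᴴ = 1 := by
    have := (Matrix.mem_unitaryGroup_iff).mp hX.eigenvectorUnitary.2
    simpa [star_eq_conjTranspose] using this
  have hU' : Uᴴ * U = 1 := by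
    have := (Matrix.mem_unitaryGroup_iff').mp hX.eigenvectorUnitary.2
    simpa [star_eq_conjTranspose] using this
  set lam := hX.eigenvalues with hlam
  set cg : (m → ℝ) → Matrix m m ℂ :=
    fun f => U * Matrix.diagonal (fun i => (f i : ℂ)) * Uᴴ with hcg
  have hmul : ∀ f g, cg f * cg g = cg (fun i => f i * g i) := by
    intro f g
    simp only [hcg]
    calc U * diagonal (fun i => (f i : ℂ)) * Uᴴ * (U * diagonal (fun i => (g i : ℂ)) * Uᴴ)
        = U * diagonal (fun i => (f i : ℂ)) * (Uᴴ * U) * diagonal (fun i => (g i : ℂ)) * Uᴴ := by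
          simp only [Matrix.mul_assoc]
      _ = U * (diagonal (fun i => (f i : ℂ)) * diagonal (fun i => (g i : ℂ))) * Uᴴ := by
          rw [hU']; simp only [Matrix.mul_one, Matrix.mul_assoc]
      _ = U * diagonal (fun i => ((f i * g i : ℝ) : ℂ)) * Uᴴ := by
          rw [diagonal_mul_diagonal]; push_cast; rfl
  have hpsd : ∀ f, (∀ i, 0 ≤ f i) → (cg f).PosSemidef := by
    intro f hf
    exact (Matrix.PosSemidef.diagonal
      (fun i => Complex.zero_le_real.mpr (hf i))).mul_mul_conjTranspose_same U
  have htr : ∀ f, (cg f).trace = ∑ i, (f i : ℂ) := by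
    intro f
    rw [hcg]
    simp only []
    rw [Matrix.trace_mul_cycle, hU', Matrix.one_mul, Matrix.trace_diagonal]
  have hsub : ∀ f g, cg f - cg g = cg (fun i => f i - g i) := by
    intro f g
    simp only [hcg, ← Matrix.sub_mul, ← Matrix.mul_sub, diagonal_sub]
    push_cast; rfl
  have hXcg : X = cg lam := by
    have := hX.spectral_theorem
    rw [Unitary.conjStarAlgAut_apply] at this
    exact this
  refine ⟨cg (fun i => max (lam i) 0), cg (fun i => max (-lam i) 0),
    cg (fun i => if 0 < lam i then 1 else 0), hpsd _ (fun i => le_max_right _ _),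
    hpsd _ (fun i => le_max_right _ _), ?_, ?_, hpsd _ (fun i => by positivity), ?_, ?_⟩
  · rw [hXcg, hsub]
    have : (fun i => max (lam i) 0 - max (-lam i) 0) = lam :=
      funext fun i => max_zero_sub_max_neg_zero_eq_self _
    rw [this]
  · rw [hmul]
    have : (fun i => max (lam i) 0 * max (-(lam i)) 0) = fun _ => (0:ℝ) := by
      funext i
      rcases le_total (lam i) 0 with h | h
      · rw [max_eq_right h, zero_mul]
      · rw [max_eq_right (by linarith : -lam i ≤ 0), mul_zero]
    rw [this, hcg]
    simp
  · have hone : (1 : Matrix m m ℂ) = cg (fun _ => 1) := by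
      rw [hcg]; simp [hU]
    rw [hone, hsub]
    exact hpsd _ (fun i => by split <;> norm_num)
  · rw [hXcg, hmul, htr, htr]
    congr 1
    funext i
    rcases lt_or_ge 0 (lam i) with h | h
    · rw [if_pos h, mul_one, max_eq_left h.le]
    · rw [if_neg (not_lt.mpr h), mul_zero, max_eq_right h]

lemma trace_mul_contraction_le {X P N C : Matrix m m ℂ} (hP : P.PosSemidef) (hN : N.PosSemidef)
    (hX : X = P - N) (h1C : (1 - C).PosSemidef) (h2C : (1 + C).PosSemidef) :
    ((X * C).trace).re ≤ P.trace.re + N.trace.re := by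
  have h1 : 0 ≤ ((P * (1 - C)).trace).re := trace_mul_nonneg hP h1C
  have h2 : 0 ≤ ((N * (1 + C)).trace).re := trace_mul_nonneg hN h2C
  have e1 : (P * (1 - C)).trace = P.trace - (P * C).trace := by
    rw [Matrix.mul_sub, Matrix.mul_one, trace_sub]
  have e2 : (N * (1 + C)).trace = N.trace + (N * C).trace := by
    rw [Matrix.mul_add, Matrix.mul_one, trace_add]
  have e3 : (X * C).trace = (P * C).trace - (N * C).trace := by
    rw [hX, Matrix.sub_mul, trace_sub]
  rw [e1] at h1; rw [e2] at h2; rw [e3]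
  simp only [Complex.sub_re, Complex.add_re] at *
  linarith



variable {n d : ℕ}

lemma tf_mul (A B : Fin n → Matrix (Fin d) (Fin d) ℂ) :
    tensorFamilyM A * tensorFamilyM B = tensorFamilyM (fun i => A i * B i) := by
  ext x y
  simp only [Matrix.mul_apply, tensorFamilyM, Matrix.of_apply]
  have h := Finset.prod_univ_sum (fun _ : Fin n => (Finset.univ : Finset (Fin d)))
    (fun i j => A i (x i) j * B i j (y i))
  rw [Fintype.piFinset_univ] at h
  rw [h]
  exact Finset.sum_congr rfl fun z _ => (Finset.prod_mul_distrib).symm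

lemma tf_conjTranspose (A : Fin n → Matrix (Fin d) (Fin d) ℂ) :
    (tensorFamilyM A)ᴴ = tensorFamilyM (fun i => (A i)ᴴ) := by
  ext x y
  simp [tensorFamilyM, Matrix.conjTranspose_apply, star_prod]

lemma tf_trace (A : Fin n → Matrix (Fin d) (Fin d) ℂ) :
    (tensorFamilyM A).trace = ∏ i, (A i).trace := by
  simp only [Matrix.trace, Matrix.diag, tensorFamilyM, Matrix.of_apply]
  have h := Finset.prod_univ_sum (fun _ : Fin n => (Finset.univ : Finset (Fin d)))
    (fun i j => A i j j)
  rw [Fintype.piFinset_univ] at h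
  rw [h]

lemma tf_psd {A : Fin n → Matrix (Fin d) (Fin d) ℂ} (h : ∀ i, (A i).PosSemidef) :
    (tensorFamilyM A).PosSemidef := by
  have key : tensorFamilyM A =
      (tensorFamilyM fun i => (h i).sqrt)ᴴ * (tensorFamilyM fun i => (h i).sqrt) := by
    have hfam : (fun i => ((h i).sqrt)ᴴ * (h i).sqrt) = A :=
      funext fun i => by rw [(msq_psd (h i)).1.eq, msq_mul_self (h i)]
    rw [tf_conjTranspose, tf_mul, hfam]
  rw [key]
  exact Matrix.posSemidef_conjTranspose_mul_self _

lemma tf_one : tensorFamilyM (fun _ : Fin n => (1 : Matrix (Fin d) (Fin d) ℂ)) = 1 := by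
  ext x y
  simp only [tensorFamilyM, Matrix.of_apply, Matrix.one_apply]
  by_cases h : x = y
  · subst h; simp
  · obtain ⟨i, hi⟩ := Function.ne_iff.mp h
    rw [if_neg h]
    exact Finset.prod_eq_zero (Finset.mem_univ i) (by simp [hi])

lemma sum_tf {κ : Type*} [Fintype κ] (F : Fin n → κ → Matrix (Fin d) (Fin d) ℂ) :
    ∑ x : Fin n → κ, tensorFamilyM (fun i => F i (x i)) =
      tensorFamilyM (fun i => ∑ j, F i j) := by
  ext a b
  simp only [Matrix.sum_apply, tensorFamilyM, Matrix.of_apply]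
  have h := Finset.prod_univ_sum (fun _ : Fin n => (Finset.univ : Finset κ))
    (fun i j => F i j (a i) (b i))
  rw [Fintype.piFinset_univ] at h
  rw [← h]

lemma tf_update_sub (A : Fin n → Matrix (Fin d) (Fin d) ℂ) (k : Fin n)
    (B C : Matrix (Fin d) (Fin d) ℂ) :
    tensorFamilyM (Function.update A k (B - C)) =
      tensorFamilyM (Function.update A k B) - tensorFamilyM (Function.update A k C) := by
  ext x y
  simp only [tensorFamilyM, Matrix.of_apply, Matrix.sub_apply]
  rw [← Finset.mul_prod_erase _ _ (Finset.mem_univ k),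
    ← Finset.mul_prod_erase _ (fun i => (Function.update A k B i) (x i) (y i)) (Finset.mem_univ k),
    ← Finset.mul_prod_erase _ (fun i => (Function.update A k C i) (x i) (y i)) (Finset.mem_univ k)]
  have hrest : ∀ M : Matrix (Fin d) (Fin d) ℂ,
      (∏ i ∈ Finset.univ.erase k, (Function.update A k M i) (x i) (y i)) =
        ∏ i ∈ Finset.univ.erase k, A i (x i) (y i) := fun M =>
    Finset.prod_congr rfl fun i hi => by
      rw [Function.update_of_ne (Finset.ne_of_mem_erase hi)]
  rw [hrest, hrest, hrest, Function.update_self, Function.update_self, Function.update_self,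
    Matrix.sub_apply, sub_mul]

lemma tf_zero {A : Fin n → Matrix (Fin d) (Fin d) ℂ} (k : Fin n) (hk : A k = 0) :
    tensorFamilyM A = 0 := by
  ext x y
  exact Finset.prod_eq_zero (Finset.mem_univ k) (by simp [hk])

lemma sqrt_prod {ι : Type*} (s : Finset ι) (f : ι → ℝ) (hf : ∀ i ∈ s, 0 ≤ f i) :
    Real.sqrt (∏ i ∈ s, f i) = ∏ i ∈ s, Real.sqrt (f i) := by
  induction s using Finset.cons_induction with
  | empty => simp
  | cons a s ha ih =>
    rw [Finset.prod_cons, Finset.prod_cons, Real.sqrt_mul (hf a (Finset.mem_cons_self a s)),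
      ih (fun i hi => hf i (Finset.mem_cons_of_mem hi))]

lemma min_le_sqrt_mul {a b : ℝ} (ha : 0 ≤ a) (hb : 0 ≤ b) : min a b ≤ Real.sqrt (a * b) := by
  rcases le_total a b with h | h
  · rw [min_eq_left h]
    calc a = Real.sqrt (a * a) := by rw [Real.sqrt_mul_self ha]
      _ ≤ Real.sqrt (a * b) := Real.sqrt_le_sqrt (by nlinarith)
  · rw [min_eq_right h]
    calc b = Real.sqrt (b * b) := by rw [Real.sqrt_mul_self hb]
      _ ≤ Real.sqrt (a * b) := Real.sqrt_le_sqrt (by nlinarith)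

lemma abs_sub_eq_two_min (a b : ℝ) : |a - b| = a + b - 2 * min a b := by
  rcases le_total a b with h | h
  · rw [min_eq_left h, abs_of_nonpos (by linarith)]; ring
  · rw [min_eq_right h, abs_of_nonneg (by linarith)]; ring

lemma bhatta_le {p q : ℝ} (h0 : 0 ≤ q) (hqp : q ≤ p) (hp1 : p ≤ 1) :
    Real.sqrt (p * q) + Real.sqrt ((1 - p) * (1 - q)) ≤ Real.exp (-(p - q) ^ 2 / 2) := by
  set s := Real.sqrt (p * q) with hs
  set t := Real.sqrt ((1 - p) * (1 - q)) with ht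
  have hs0 : 0 ≤ s := Real.sqrt_nonneg _
  have ht0 : 0 ≤ t := Real.sqrt_nonneg _
  have hs2 : s ^ 2 = p * q := Real.sq_sqrt (by nlinarith)
  have ht2 : t ^ 2 = (1 - p) * (1 - q) := Real.sq_sqrt (by nlinarith)
  have hst : s * t = Real.sqrt ((p * (1 - p)) * (q * (1 - q))) := by
    rw [hs, ht, ← Real.sqrt_mul (by nlinarith)]
    congr 1
    ring
  have hst_le : s * t ≤ (p * (1 - p) + q * (1 - q)) / 2 := by
    rw [hst]
    calc Real.sqrt ((p * (1 - p)) * (q * (1 - q)))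
        ≤ Real.sqrt (((p * (1 - p) + q * (1 - q)) / 2) ^ 2) :=
          Real.sqrt_le_sqrt (by nlinarith [sq_nonneg (p * (1 - p) - q * (1 - q))])
      _ = (p * (1 - p) + q * (1 - q)) / 2 := Real.sqrt_sq (by nlinarith)
  have hB2 : (s + t) ^ 2 ≤ 1 - (p - q) ^ 2 := by nlinarith
  have hB : s + t ≤ Real.sqrt (1 - (p - q) ^ 2) := by
    calc s + t = Real.sqrt ((s + t) ^ 2) := (Real.sqrt_sq (by linarith)).symm
      _ ≤ Real.sqrt (1 - (p - q) ^ 2) := Real.sqrt_le_sqrt hB2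
  refine hB.trans ?_
  have h1 : 1 - (p - q) ^ 2 ≤ Real.exp (-(p - q) ^ 2) := by
    have := Real.add_one_le_exp (-(p - q) ^ 2)
    linarith
  calc Real.sqrt (1 - (p - q) ^ 2) ≤ Real.sqrt (Real.exp (-(p - q) ^ 2)) :=
        Real.sqrt_le_sqrt h1
    _ = Real.exp (-(p - q) ^ 2 / 2) := by
        have hexp : Real.exp (-(p - q) ^ 2) =
            Real.exp (-(p - q) ^ 2 / 2) * Real.exp (-(p - q) ^ 2 / 2) := by
          rw [← Real.exp_add]; ring_nf
        rw [hexp, Real.sqrt_mul_self (Real.exp_nonneg _)]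

lemma classical_bound {n : ℕ} (p q : Fin n → ℝ) (h0 : ∀ i, 0 ≤ q i) (hqp : ∀ i, q i ≤ p i)
    (hp1 : ∀ i, p i ≤ 1) :
    1 - Real.exp (-(1 / 2 * ∑ i, (p i - q i) ^ 2)) ≤
      (∑ x : Fin n → Bool, |(∏ i, (if x i then p i else 1 - p i)) -
        ∏ i, (if x i then q i else 1 - q i)|) / 2 := by
  set fp : Fin n → Bool → ℝ := fun i b => if b then p i else 1 - p i with hfp
  set fq : Fin n → Bool → ℝ := fun i b => if b then q i else 1 - q i with hfq
  have hfp0 : ∀ i b, 0 ≤ fp i b := by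
    intro i b; cases b <;> simp [hfp] <;> [linarith [hp1 i]; linarith [h0 i, hqp i, hp1 i]]
  have hfq0 : ∀ i b, 0 ≤ fq i b := by
    intro i b; cases b <;> simp [hfq] <;> [linarith [hqp i, hp1 i]; exact h0 i]
  have key : ∀ (f : Fin n → Bool → ℝ),
      ∑ x : Fin n → Bool, ∏ i, f i (x i) = ∏ i, (f i true + f i false) := by
    intro f
    have h := Finset.prod_univ_sum (fun _ : Fin n => (Finset.univ : Finset Bool))
      (fun i b => f i b)
    rw [Fintype.piFinset_univ] at h
    rw [← h]
    exact Finset.prod_congr rfl fun i _ => by rw [Fintype.sum_bool]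
  have hP1 : ∑ x : Fin n → Bool, ∏ i, fp i (x i) = 1 := by
    rw [key]; exact Finset.prod_eq_one fun i _ => by simp [hfp]
  have hQ1 : ∑ x : Fin n → Bool, ∏ i, fq i (x i) = 1 := by
    rw [key]; exact Finset.prod_eq_one fun i _ => by simp [hfq]
  have hmin : ∀ x : Fin n → Bool,
      min (∏ i, fp i (x i)) (∏ i, fq i (x i)) ≤ ∏ i, Real.sqrt (fp i (x i) * fq i (x i)) := by
    intro x
    calc min (∏ i, fp i (x i)) (∏ i, fq i (x i))
        ≤ Real.sqrt ((∏ i, fp i (x i)) * ∏ i, fq i (x i)) :=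
          min_le_sqrt_mul (Finset.prod_nonneg fun i _ => hfp0 i _)
            (Finset.prod_nonneg fun i _ => hfq0 i _)
      _ = ∏ i, Real.sqrt (fp i (x i) * fq i (x i)) := by
          rw [← Finset.prod_mul_distrib, sqrt_prod _ _ (fun i _ => mul_nonneg (hfp0 i _) (hfq0 i _))]
  have hsummin : ∑ x : Fin n → Bool, min (∏ i, fp i (x i)) (∏ i, fq i (x i)) ≤
      Real.exp (-(1 / 2 * ∑ i, (p i - q i) ^ 2)) := by
    calc ∑ x : Fin n → Bool, min (∏ i, fp i (x i)) (∏ i, fq i (x i))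
        ≤ ∑ x : Fin n → Bool, ∏ i, Real.sqrt (fp i (x i) * fq i (x i)) :=
          Finset.sum_le_sum fun x _ => hmin x
      _ = ∏ i, (Real.sqrt (p i * q i) + Real.sqrt ((1 - p i) * (1 - q i))) := by
          rw [key (fun i b => Real.sqrt (fp i b * fq i b))]
          exact Finset.prod_congr rfl fun i _ => by simp [hfp, hfq]
      _ ≤ ∏ i, Real.exp (-(p i - q i) ^ 2 / 2) :=
          Finset.prod_le_prod
            (fun i _ => add_nonneg (Real.sqrt_nonneg _) (Real.sqrt_nonneg _))
            (fun i _ => bhatta_le (h0 i) (hqp i) (hp1 i))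
      _ = Real.exp (-(1 / 2 * ∑ i, (p i - q i) ^ 2)) := by
          rw [← Real.exp_sum]
          congr 1
          rw [Finset.mul_sum, ← Finset.sum_neg_distrib]
          exact Finset.sum_congr rfl fun i _ => by ring
  have habs : ∑ x : Fin n → Bool, |(∏ i, fp i (x i)) - ∏ i, fq i (x i)| =
      2 - 2 * ∑ x : Fin n → Bool, min (∏ i, fp i (x i)) (∏ i, fq i (x i)) := by
    rw [Finset.sum_congr rfl (fun x _ => abs_sub_eq_two_min _ _), Finset.sum_sub_distrib,
      Finset.sum_add_distrib, hP1, hQ1, ← Finset.mul_sum]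
    norm_num
  rw [habs]
  linarith



end TPB

set_option maxHeartbeats 1600000 in
/-- **Trace distance between tensor product states.** -/
theorem trace_tensor_product_bounds {d n : ℕ}
    (ρ σ : Fin n → Matrix (Fin d) (Fin d) ℂ)
    (hρ : ∀ i, IsDensityMatrix (ρ i)) (hσ : ∀ i, IsDensityMatrix (σ i)) :
    1 - Real.exp (-(1 / 2 * ∑ i, trDist (ρ i) (σ i) ^ 2)) ≤
        trDist (tensorFamilyM ρ) (tensorFamilyM σ) ∧
    trDist (tensorFamilyM ρ) (tensorFamilyM σ) ≤ ∑ i, trDist (ρ i) (σ i) := by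
  classical
  have hherm : ∀ i, (ρ i - σ i).IsHermitian := fun i => ((hρ i).1.1).sub ((hσ i).1.1)
  choose P N Q hP hN hXPN hPN hQ h1Q htrQ using fun i => TPB.hermitian_decomp (hherm i)
  set dd : Fin n → ℝ := fun i => (P i).trace.re with hdd
  have htrPN : ∀ i, (P i).trace = (N i).trace := by
    intro i
    have h0 : (ρ i - σ i).trace = 0 := by
      rw [trace_sub, (hρ i).2, (hσ i).2, sub_self]
    rw [hXPN i, trace_sub, sub_eq_zero] at h0
    exact h0
  have hdist : ∀ i, trDist (ρ i) (σ i) = dd i := by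
    intro i
    rw [trDist, TPB.traceNorm_eq_posneg (hP i) (hN i) (hXPN i) (hPN i)]
    have h := congrArg Complex.re (htrPN i)
    rw [hdd]
    dsimp only
    linarith
  set X := tensorFamilyM ρ - tensorFamilyM σ with hXdef
  have hXherm : X.IsHermitian := by
    have hfr : (fun i => (ρ i)ᴴ) = ρ := funext fun i => (hρ i).1.1
    have hfσ : (fun i => (σ i)ᴴ) = σ := funext fun i => (hσ i).1.1
    have h1 : (tensorFamilyM ρ)ᴴ = tensorFamilyM ρ := by rw [TPB.tf_conjTranspose, hfr]
    have h2 : (tensorFamilyM σ)ᴴ = tensorFamilyM σ := by rw [TPB.tf_conjTranspose, hfσ]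
    show Xᴴ = X
    rw [hXdef, conjTranspose_sub, h1, h2]
  obtain ⟨P0, N0, Q0, hP0, hN0, hXPN0, hPN0, hQ0, h1Q0, htrQ0⟩ := TPB.hermitian_decomp hXherm
  have hnormX : traceNorm X = P0.trace.re + N0.trace.re :=
    TPB.traceNorm_eq_posneg hP0 hN0 hXPN0 hPN0
  have hdistX : trDist (tensorFamilyM ρ) (tensorFamilyM σ) = traceNorm X / 2 := by
    rw [trDist, hXdef]
  -- ===== upper bound =====
  set c : ℕ → Fin n → Matrix (Fin d) (Fin d) ℂ :=
    fun k i => if (i : ℕ) < k then σ i else ρ i with hc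
  set T : Fin n → Matrix (Fin n → Fin d) (Fin n → Fin d) ℂ :=
    fun k => tensorFamilyM (Function.update (c (k : ℕ)) k (ρ k - σ k)) with hT
  have hg0 : c 0 = ρ := by funext i; simp [hc]
  have hgn : c n = σ := by funext i; simp [hc, i.isLt]
  have hstep : ∀ k : Fin n,
      tensorFamilyM (c (k : ℕ)) - tensorFamilyM (c ((k : ℕ) + 1)) = T k := by
    intro k
    have h1 : Function.update (c (k : ℕ)) k (ρ k) = c (k : ℕ) := by
      funext i
      rcases eq_or_ne i k with rfl | hik
      · simp [hc]
      · rw [Function.update_of_ne hik]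
    have h2 : Function.update (c (k : ℕ)) k (σ k) = c ((k : ℕ) + 1) := by
      funext i
      rcases eq_or_ne i k with rfl | hik
      · simp [hc]
      · rw [Function.update_of_ne hik]
        have hvne : (i : ℕ) ≠ (k : ℕ) := fun h => hik (Fin.val_injective h)
        have hv : ((i : ℕ) < (k : ℕ) + 1) = ((i : ℕ) < (k : ℕ)) := by
          apply propext; omega
        simp only [hc, hv]
    rw [hT]
    dsimp only
    rw [TPB.tf_update_sub, h1, h2]
  have htele : X = ∑ k : Fin n, T k := by
    have h := Finset.sum_range_sub' (fun k => tensorFamilyM (c k)) n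
    calc X = tensorFamilyM (c 0) - tensorFamilyM (c n) := by rw [hg0, hgn]
      _ = ∑ k ∈ Finset.range n,
          (tensorFamilyM (c k) - tensorFamilyM (c (k + 1))) := h.symm
      _ = ∑ k : Fin n,
          (tensorFamilyM (c (k : ℕ)) - tensorFamilyM (c ((k : ℕ) + 1))) :=
          (Fin.sum_univ_eq_sum_range
            (fun k => tensorFamilyM (c k) - tensorFamilyM (c (k + 1))) n).symm
      _ = ∑ k : Fin n, T k := Finset.sum_congr rfl fun k _ => hstep k
  have hcPSD : ∀ (k : ℕ) (i : Fin n), ((c k) i).PosSemidef := by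
    intro k i
    rw [hc]
    dsimp only
    split
    · exact (hσ i).1
    · exact (hρ i).1
  have hcTr : ∀ (k : ℕ) (i : Fin n), ((c k) i).trace = 1 := by
    intro k i
    rw [hc]
    dsimp only
    split
    · exact (hσ i).2
    · exact (hρ i).2
  have hupd_psd : ∀ (k : Fin n) (M : Matrix (Fin d) (Fin d) ℂ), M.PosSemidef →
      ∀ i, (Function.update (c (k : ℕ)) k M i).PosSemidef := by
    intro k M hM i
    rcases eq_or_ne i k with rfl | hik
    · rwa [Function.update_self]
    · rw [Function.update_of_ne hik]; exact hcPSD _ i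
  have hupd_tr : ∀ (k : Fin n) (M : Matrix (Fin d) (Fin d) ℂ),
      (tensorFamilyM (Function.update (c (k : ℕ)) k M)).trace = M.trace := by
    intro k M
    rw [TPB.tf_trace, ← Finset.mul_prod_erase _ _ (Finset.mem_univ k), Function.update_self,
      Finset.prod_eq_one (fun i hi => by
        rw [Function.update_of_ne (Finset.ne_of_mem_erase hi)]; exact hcTr _ i), mul_one]
  have hTdecomp : ∀ k : Fin n, T k = tensorFamilyM (Function.update (c (k : ℕ)) k (P k))
      - tensorFamilyM (Function.update (c (k : ℕ)) k (N k)) := by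
    intro k
    rw [hT]
    dsimp only
    rw [hXPN k, TPB.tf_update_sub]
  have hTnorm : ∀ k : Fin n, traceNorm (T k) = 2 * dd k := by
    intro k
    have hP' := TPB.tf_psd (hupd_psd k (P k) (hP k))
    have hN' := TPB.tf_psd (hupd_psd k (N k) (hN k))
    have hprod : tensorFamilyM (Function.update (c (k : ℕ)) k (P k)) *
        tensorFamilyM (Function.update (c (k : ℕ)) k (N k)) = 0 := by
      rw [TPB.tf_mul]
      exact TPB.tf_zero k (by rw [Function.update_self, Function.update_self, hPN k])
    rw [TPB.traceNorm_eq_posneg hP' hN' (hTdecomp k) hprod, hupd_tr, hupd_tr]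
    have h := congrArg Complex.re (htrPN k)
    rw [hdd]
    dsimp only
    linarith
  set C := Q0 - (1 - Q0) with hC
  have h1C : (1 - C).PosSemidef := by
    have h : 1 - C = (1 - Q0) + (1 - Q0) := by rw [hC]; abel
    rw [h]; exact h1Q0.add h1Q0
  have h2C : (1 + C).PosSemidef := by
    have h : 1 + C = Q0 + Q0 := by rw [hC]; abel
    rw [h]; exact hQ0.add hQ0
  have hXC : ((X * C).trace).re = traceNorm X := by
    have e : (X * C).trace = P0.trace + N0.trace := by
      have hXtr : X.trace = P0.trace - N0.trace := by rw [hXPN0, trace_sub]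
      rw [hC, Matrix.mul_sub, Matrix.mul_sub, Matrix.mul_one, trace_sub, trace_sub, htrQ0,
        hXtr]
      ring
    rw [e, hnormX, Complex.add_re]
  have hsub : traceNorm X ≤ ∑ k, traceNorm (T k) := by
    rw [← hXC]
    calc ((X * C).trace).re = ∑ k, ((T k * C).trace).re := by
          rw [htele, Finset.sum_mul, Matrix.trace_sum, Complex.re_sum]
      _ ≤ ∑ k, traceNorm (T k) := by
          refine Finset.sum_le_sum fun k _ => ?_
          have hP' := TPB.tf_psd (hupd_psd k (P k) (hP k))
          have hN' := TPB.tf_psd (hupd_psd k (N k) (hN k))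
          have hprod : tensorFamilyM (Function.update (c (k : ℕ)) k (P k)) *
              tensorFamilyM (Function.update (c (k : ℕ)) k (N k)) = 0 := by
            rw [TPB.tf_mul]
            exact TPB.tf_zero k (by rw [Function.update_self, Function.update_self, hPN k])
          have hle := TPB.trace_mul_contraction_le hP' hN' (hTdecomp k) h1C h2C
          rwa [← TPB.traceNorm_eq_posneg hP' hN' (hTdecomp k) hprod] at hle
  have hupper : trDist (tensorFamilyM ρ) (tensorFamilyM σ) ≤ ∑ i, trDist (ρ i) (σ i) := by
    rw [hdistX]
    have h1 : ∑ k, traceNorm (T k) = 2 * ∑ k, dd k := by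
      rw [Finset.mul_sum]
      exact Finset.sum_congr rfl fun k _ => hTnorm k
    have h2 : ∑ i, trDist (ρ i) (σ i) = ∑ i, dd i :=
      Finset.sum_congr rfl fun i _ => hdist i
    rw [h2]
    linarith
  -- ===== lower bound =====
  set p : Fin n → ℝ := fun i => ((ρ i * Q i).trace).re with hpdef
  set q : Fin n → ℝ := fun i => ((σ i * Q i).trace).re with hqdef
  have hrealρ : ∀ i, (ρ i * Q i).trace = (p i : ℂ) := fun i =>
    TPB.trace_mul_real (hρ i).1.1 (hQ i).1
  have hrealσ : ∀ i, (σ i * Q i).trace = (q i : ℂ) := fun i =>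
    TPB.trace_mul_real (hσ i).1.1 (hQ i).1
  have hpq : ∀ i, p i - q i = dd i := by
    intro i
    have h := congrArg Complex.re (htrQ i)
    rw [Matrix.sub_mul, trace_sub] at h
    simpa [Complex.sub_re] using h
  have hq0 : ∀ i, 0 ≤ q i := fun i => TPB.trace_mul_nonneg (hσ i).1 (hQ i)
  have hd0 : ∀ i, 0 ≤ dd i := fun i => TPB.psd_trace_re_nonneg (hP i)
  have hqp : ∀ i, q i ≤ p i := by
    intro i
    have h1 := hpq i
    have h2 := hd0 i
    linarith
  have hp1 : ∀ i, p i ≤ 1 := by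
    intro i
    have h := TPB.trace_mul_nonneg (hρ i).1 (h1Q i)
    have e : (ρ i * (1 - Q i)).trace = 1 - (ρ i * Q i).trace := by
      rw [Matrix.mul_sub, Matrix.mul_one, trace_sub, (hρ i).2]
    rw [e, Complex.sub_re, Complex.one_re] at h
    have : ((ρ i * Q i).trace).re = p i := rfl
    linarith
  set Mf : Fin n → Bool → Matrix (Fin d) (Fin d) ℂ :=
    fun i b => if b then Q i else 1 - Q i with hMf
  set M : (Fin n → Bool) → Matrix (Fin n → Fin d) (Fin n → Fin d) ℂ :=
    fun x => tensorFamilyM (fun i => Mf i (x i)) with hM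
  have hMfpsd : ∀ i b, (Mf i b).PosSemidef := by
    intro i b
    rw [hMf]
    cases b
    · simpa using h1Q i
    · simpa using hQ i
  have hMpsd : ∀ x, (M x).PosSemidef := fun x => TPB.tf_psd fun i => hMfpsd i (x i)
  have hMsum : ∑ x : Fin n → Bool, M x = 1 := by
    rw [hM]
    dsimp only
    rw [TPB.sum_tf]
    have h : (fun i : Fin n => ∑ b : Bool, Mf i b) =
        fun _ => (1 : Matrix (Fin d) (Fin d) ℂ) := by
      funext i
      rw [Fintype.sum_bool, hMf]
      show Q i + (1 - Q i) = 1
      abel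
    rw [h, TPB.tf_one]
  have htrρM : ∀ x : Fin n → Bool, (tensorFamilyM ρ * M x).trace =
      ((∏ i, (if x i then p i else 1 - p i) : ℝ) : ℂ) := by
    intro x
    rw [hM]
    dsimp only
    rw [TPB.tf_mul, TPB.tf_trace, Complex.ofReal_prod]
    refine Finset.prod_congr rfl fun i _ => ?_
    rw [hMf]
    cases hxi : x i
    · show (ρ i * (1 - Q i)).trace = ((1 - p i : ℝ) : ℂ)
      rw [Matrix.mul_sub, Matrix.mul_one, trace_sub, (hρ i).2, hrealρ i]
      push_cast
      ring
    · show (ρ i * Q i).trace = ((p i : ℝ) : ℂ)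
      exact hrealρ i
  have htrσM : ∀ x : Fin n → Bool, (tensorFamilyM σ * M x).trace =
      ((∏ i, (if x i then q i else 1 - q i) : ℝ) : ℂ) := by
    intro x
    rw [hM]
    dsimp only
    rw [TPB.tf_mul, TPB.tf_trace, Complex.ofReal_prod]
    refine Finset.prod_congr rfl fun i _ => ?_
    rw [hMf]
    cases hxi : x i
    · show (σ i * (1 - Q i)).trace = ((1 - q i : ℝ) : ℂ)
      rw [Matrix.mul_sub, Matrix.mul_one, trace_sub, (hσ i).2, hrealσ i]
      push_cast
      ring
    · show (σ i * Q i).trace = ((q i : ℝ) : ℂ)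
      exact hrealσ i
  have hXM : ∀ x : Fin n → Bool, ((X * M x).trace).re =
      (∏ i, (if x i then p i else 1 - p i)) - ∏ i, (if x i then q i else 1 - q i) := by
    intro x
    rw [hXdef, Matrix.sub_mul, trace_sub, htrρM x, htrσM x]
    rw [← Complex.ofReal_sub, Complex.ofReal_re]
  have hmeas : ∑ x : Fin n → Bool, |((X * M x).trace).re| ≤ traceNorm X := by
    calc ∑ x : Fin n → Bool, |((X * M x).trace).re|
        ≤ ∑ x : Fin n → Bool, (((P0 * M x).trace).re + ((N0 * M x).trace).re) := by
          refine Finset.sum_le_sum fun x _ => ?_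
          have hsplit : (X * M x).trace = (P0 * M x).trace - (N0 * M x).trace := by
            rw [hXPN0, Matrix.sub_mul, trace_sub]
          rw [hsplit, Complex.sub_re]
          have h1 := TPB.trace_mul_nonneg hP0 (hMpsd x)
          have h2 := TPB.trace_mul_nonneg hN0 (hMpsd x)
          exact abs_le.mpr ⟨by linarith, by linarith⟩
      _ = traceNorm X := by
          rw [Finset.sum_add_distrib]
          have e1 : ∑ x : Fin n → Bool, ((P0 * M x).trace).re =
              ((P0 * ∑ x : Fin n → Bool, M x).trace).re := by
            rw [Finset.mul_sum, Matrix.trace_sum, Complex.re_sum]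
          have e2 : ∑ x : Fin n → Bool, ((N0 * M x).trace).re =
              ((N0 * ∑ x : Fin n → Bool, M x).trace).re := by
            rw [Finset.mul_sum, Matrix.trace_sum, Complex.re_sum]
          rw [e1, e2, hMsum, Matrix.mul_one, Matrix.mul_one, hnormX]
  have hlow := TPB.classical_bound p q hq0 hqp hp1
  have heq : ∑ x : Fin n → Bool, |(∏ i, (if x i then p i else 1 - p i)) -
      ∏ i, (if x i then q i else 1 - q i)| ≤ traceNorm X := by
    calc ∑ x : Fin n → Bool, |(∏ i, (if x i then p i else 1 - p i)) -
        ∏ i, (if x i then q i else 1 - q i)|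
        = ∑ x : Fin n → Bool, |((X * M x).trace).re| :=
          Finset.sum_congr rfl fun x _ => by rw [hXM x]
      _ ≤ traceNorm X := hmeas
  refine ⟨?_, hupper⟩
  rw [hdistX]
  have hdd_eq : ∑ i, trDist (ρ i) (σ i) ^ 2 = ∑ i, (p i - q i) ^ 2 :=
    Finset.sum_congr rfl fun i _ => by rw [hdist i, ← hpq i]
  rw [hdd_eq]
  linarith
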